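/- Let Y be a locally compact metric space and Z a compact subset of Y. Assume that every compact subset of Y containing Z has nonempty boundary (in Y). Then Y \ Z contains a connected set whose closure in Y intersects Z and is not compact. -/

import Mathlib

open Set Topology
open scoped OnePoint

section Aux

variable {X : Type*} [TopologicalSpace X]




/-- In a compact T2 space, if a closed set is disjoint from the connected component of `x`,
then some clopen neighborhood of `x` is disjoint from it. -/
lemma aux_clopen_sep [T2Space X] [CompactSpace X] (x : X) {L : Set X}
    (hL : IsClosed L) (hdisj : connectedComponent x ∩ L = ∅) :
    ∃ V : Set X, IsClopen V ∧ x ∈ V ∧ V ∩ L = ∅ := by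
  by_contra hcon
  push_neg at hcon
  have : Nonempty {s : Set X // IsClopen s ∧ x ∈ s} := ⟨⟨univ, isClopen_univ, mem_univ x⟩⟩
  have hne : ∀ s : {s : Set X // IsClopen s ∧ x ∈ s}, (s.1 ∩ L).Nonempty :=
    fun s => hcon s.1 s.2.1 s.2.2
  have hdir : Directed (· ⊇ ·) (fun s : {s : Set X // IsClopen s ∧ x ∈ s} => s.1 ∩ L) := by
    rintro ⟨s, hs, hxs⟩ ⟨t, ht, hxt⟩
    exact ⟨⟨s ∩ t, hs.inter ht, ⟨hxs, hxt⟩⟩,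
      inter_subset_inter_left _ inter_subset_left,
      inter_subset_inter_left _ inter_subset_right⟩
  obtain ⟨y, hy⟩ := IsCompact.nonempty_iInter_of_directed_nonempty_isCompact_isClosed
    (fun s : {s : Set X // IsClopen s ∧ x ∈ s} => s.1 ∩ L) hdir hne
    (fun s => ((s.2.1.1.inter hL).isCompact))
    (fun s => (s.2.1.1.inter hL))
  simp only [mem_iInter, mem_inter_iff] at hy
  have hyL : y ∈ L := (hy ⟨univ, isClopen_univ, mem_univ x⟩).2
  have hyc : y ∈ connectedComponent x := by
    rw [connectedComponent_eq_iInter_isClopen x, mem_iInter]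
    exact fun s => (hy s).1
  exact absurd hdisj (by rw [eq_empty_iff_forall_notMem] at *; exact fun h => h y ⟨hyc, hyL⟩)

/-- Boundary bumping: in a compact connected T2 space, the closure of a connected component
of a proper open set is not contained in that open set. -/
lemma aux_bump [T2Space X] [CompactSpace X] [ConnectedSpace X] {U : Set X}
    (hU : IsOpen U) (hUne : U ≠ univ) {x : X} (hx : x ∈ U) :
    ¬ closure (connectedComponentIn U x) ⊆ U := by
  intro hsub
  set E := connectedComponentIn U x with hE
  have hEpre : IsPreconnected E := isPreconnected_connectedComponentIn
  have hxE : x ∈ E := mem_connectedComponentIn hx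
  have hEU : E ⊆ U := connectedComponentIn_subset U x
  have hEclosed : IsClosed E := by
    have h1 : closure E ⊆ E :=
      hEpre.closure.subset_connectedComponentIn (subset_closure hxE) hsub
    exact isClosed_of_closure_subset h1
  have hEcpt : IsCompact E := hEclosed.isCompact
  obtain ⟨o, w, ho, hw, hEo, hUw, hdisj⟩ :=
    SeparatedNhds.of_isCompact_isCompact hEcpt (hU.isClosed_compl.isCompact)
      (disjoint_compl_right.mono_left hEU)
  have how : o ⊆ wᶜ := fun y hy hyw => hdisj.le_bot ⟨hy, hyw⟩
  have hTo : closure o ⊆ wᶜ := closure_minimal how hw.isClosed_compl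
  have hTU : closure o ⊆ U := fun y hy => by
    by_contra hyU
    exact hTo hy (hUw hyU)
  set T := closure o with hT
  have hTclosed : IsClosed T := isClosed_closure
  have : CompactSpace T := isCompact_iff_compactSpace.mp hTclosed.isCompact
  have hoT : o ⊆ T := subset_closure
  set x' : T := ⟨x, hoT (hEo hxE)⟩ with hx'
  -- the connected component of x' in T corresponds to E
  have himg : Subtype.val '' (connectedComponent x') = E := by
    apply Subset.antisymm
    · apply IsPreconnected.subset_connectedComponentIn
      · exact isPreconnected_connectedComponent.image _ continuous_subtype_val.continuousOn
      · exact ⟨x', mem_connectedComponent, rfl⟩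
      · exact (image_subset_iff.mpr (fun z _ => z.2)).trans hTU
    · intro e he
      have hpre : IsPreconnected ((Subtype.val ⁻¹' E : Set T)) := by
        rw [← Topology.IsInducing.subtypeVal.isPreconnected_image]
        rwa [Subtype.image_preimage_coe, inter_eq_right.mpr ((hEo.trans hoT))]
      have : (⟨e, hoT (hEo he)⟩ : T) ∈ connectedComponent x' :=
        hpre.subset_connectedComponent (by simpa using hxE) (by simpa using he)
      exact ⟨⟨e, hoT (hEo he)⟩, this, rfl⟩
  have hLclosed : IsClosed (Subtype.val ⁻¹' (T \ o) : Set T) :=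
    (hTclosed.sdiff ho).preimage continuous_subtype_val
  have hdisj2 : connectedComponent x' ∩ (Subtype.val ⁻¹' (T \ o)) = ∅ := by
    rw [eq_empty_iff_forall_notMem]
    rintro z ⟨hz1, hz2⟩
    exact hz2.2 (hEo (himg ▸ ⟨z, hz1, rfl⟩ : (z : X) ∈ E))
  obtain ⟨V', hV', hxV', hV'dis⟩ := aux_clopen_sep x' hLclosed hdisj2
  set V : Set X := Subtype.val '' V' with hV
  have hVo : V ⊆ o := by
    rintro _ ⟨z, hz, rfl⟩
    by_contra hzo
    exact (eq_empty_iff_forall_notMem.mp hV'dis) z ⟨hz, ⟨z.2, hzo⟩⟩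
  have hVclosed : IsClosed V :=
    ((hV'.1.isCompact).image continuous_subtype_val).isClosed
  have hVopen : IsOpen V := by
    obtain ⟨G, hG, hGV⟩ := hV'.2
    have : V = G ∩ o := by
      apply Subset.antisymm
      · rintro _ ⟨z, hz, rfl⟩
        refine ⟨?_, hVo ⟨z, hz, rfl⟩⟩
        have : z ∈ Subtype.val ⁻¹' G := hGV ▸ hz
        exact this
      · rintro y ⟨hyG, hyo⟩
        exact ⟨⟨y, hoT hyo⟩, hGV ▸ hyG, rfl⟩
    rw [this]
    exact hG.inter ho
  have : V = univ := IsClopen.eq_univ ⟨hVclosed, hVopen⟩ ⟨x, ⟨x', hxV', rfl⟩⟩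
  apply hUne
  apply Subset.antisymm (subset_univ U)
  calc univ = V := this.symm
    _ ⊆ o := hVo
    _ ⊆ U := hoT.trans hTU



/-- The intersection of a chain of closed preconnected sets in a compact T2 space
is preconnected. -/
lemma aux_inter_chain [T2Space X] [CompactSpace X] {c : Set (Set X)}
    (hc : IsChain (· ⊆ ·) c) (hne : c.Nonempty)
    (hcl : ∀ s ∈ c, IsClosed s) (hconn : ∀ s ∈ c, IsPreconnected s) :
    IsPreconnected (⋂₀ c) := by
  have hKcl : IsClosed (⋂₀ c) := isClosed_sInter hcl
  rw [isPreconnected_iff_subset_of_fully_disjoint_closed hKcl]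
  intro a b ha hb hab hdisj
  obtain ⟨u, v, hu, hv, hau, hbv, huv⟩ :=
    SeparatedNhds.of_isCompact_isCompact ha.isCompact hb.isCompact hdisj
  have : Nonempty c := hne.to_subtype
  -- some element of the chain is contained in u ∪ v
  have hex : ∃ s ∈ c, s ⊆ u ∪ v := by
    by_contra hcon
    push_neg at hcon
    obtain ⟨y, hy⟩ := IsCompact.nonempty_iInter_of_directed_nonempty_isCompact_isClosed
      (fun s : c => s.1 \ (u ∪ v))
      (by
        rintro ⟨s, hs⟩ ⟨t, ht⟩
        rcases hc.total hs ht with h | h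
        · exact ⟨⟨s, hs⟩, diff_subset_diff_left (le_refl s), diff_subset_diff_left h⟩
        · exact ⟨⟨t, ht⟩, diff_subset_diff_left h, diff_subset_diff_left (le_refl t)⟩)
      (fun s => by
        rcases not_subset.mp (hcon s.1 s.2) with ⟨y, hy1, hy2⟩
        exact ⟨y, hy1, hy2⟩)
      (fun s => ((hcl s.1 s.2).sdiff (hu.union hv)).isCompact)
      (fun s => (hcl s.1 s.2).sdiff (hu.union hv))
    simp only [mem_iInter, mem_diff] at hy
    have hyK : y ∈ ⋂₀ c := by
      rw [mem_sInter]; exact fun s hs => (hy ⟨s, hs⟩).1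
    exact (hy ⟨hne.some, hne.some_mem⟩).2 ((union_subset_union hau hbv) (hab hyK))
  obtain ⟨s₀, hs₀c, hs₀uv⟩ := hex
  have hKs₀ : ⋂₀ c ⊆ s₀ := sInter_subset_of_mem hs₀c
  rcases (hconn s₀ hs₀c).subset_or_subset hu hv huv hs₀uv with h | h
  · left
    intro y hy
    rcases hab hy with h' | h'
    · exact h'
    · exact absurd (hbv h') (huv.le_bot ⟨h (hKs₀ hy), hbv h'⟩).elim
  · right
    intro y hy
    rcases hab hy with h' | h'
    · exact absurd (hau h') (huv.le_bot ⟨hau h', h (hKs₀ hy)⟩).elim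
    · exact h'

open Set in
/-- Structure of a minimal continuum joining a closed set `A` to a point `b`. -/
lemma aux_min {X : Type*} [TopologicalSpace X] [T2Space X] [CompactSpace X] [ConnectedSpace X]
    {A : Set X} (hA : IsClosed A) (hAne : A.Nonempty) {b : X} (hb : b ∉ A)
    (hmin : ∀ E : Set X, IsClosed E → IsPreconnected E → b ∈ E → (E ∩ A).Nonempty → E = univ) :
    (Aᶜ \ {b}).Nonempty ∧ IsPreconnected (Aᶜ \ {b}) ∧ b ∈ closure (Aᶜ \ {b}) ∧
      (closure (Aᶜ \ {b}) ∩ A).Nonempty := by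
  set S := Aᶜ \ {b} with hSdef
  have hbAc : b ∈ Aᶜ := hb
  -- S is nonempty
  have hSne : S.Nonempty := by
    by_contra h
    rw [not_nonempty_iff_eq_empty, diff_eq_empty] at h
    have hAc : Aᶜ = {b} := Subset.antisymm h (singleton_subset_iff.mpr hbAc)
    have hbo : IsOpen ({b} : Set X) := hAc ▸ hA.isOpen_compl
    have : ({b} : Set X) = univ := IsClopen.eq_univ ⟨isClosed_singleton, hbo⟩ ⟨b, rfl⟩
    obtain ⟨a, ha⟩ := hAne
    have : a ∈ Aᶜ := hAc ▸ (this ▸ mem_univ a)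
    exact this ha
  -- (i) Aᶜ is preconnected (and dense)
  have hAcne : Aᶜ ≠ univ := by
    intro h
    obtain ⟨a, ha⟩ := hAne
    exact (h ▸ mem_univ a : a ∈ Aᶜ) ha
  obtain ⟨a₀, ha₀E, ha₀A⟩ : ∃ a₀, a₀ ∈ closure (connectedComponentIn Aᶜ b) ∧ a₀ ∈ A := by
    rcases not_subset.mp (aux_bump hA.isOpen_compl hAcne hbAc) with ⟨y, hy1, hy2⟩
    exact ⟨y, hy1, not_not.mp hy2⟩
  have hEuniv : closure (connectedComponentIn Aᶜ b) = univ :=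
    hmin _ isClosed_closure isPreconnected_connectedComponentIn.closure
      (subset_closure (mem_connectedComponentIn hbAc)) ⟨a₀, ha₀E, ha₀A⟩
  have hAcpre : IsPreconnected (Aᶜ : Set X) :=
    isPreconnected_connectedComponentIn.subset_closure (connectedComponentIn_subset _ _)
      (by rw [hEuniv]; exact subset_univ _)
  -- (ii) {b}ᶜ is preconnected
  obtain ⟨a₁, ha₁⟩ := hAne
  have ha₁b : a₁ ∈ ({b}ᶜ : Set X) := by
    simp only [mem_compl_iff, mem_singleton_iff]
    rintro rfl; exact hb ha₁
  have hbcne : ({b}ᶜ : Set X) ≠ univ := by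
    intro h
    exact (h ▸ mem_univ b : b ∈ ({b}ᶜ : Set X)) rfl
  have hbmem : b ∈ closure (connectedComponentIn {b}ᶜ a₁) := by
    rcases not_subset.mp (aux_bump isClosed_singleton.isOpen_compl hbcne ha₁b) with ⟨y, hy1, hy2⟩
    simp only [mem_compl_iff, mem_singleton_iff, not_not] at hy2
    exact hy2 ▸ hy1
  have hE2univ : closure (connectedComponentIn ({b}ᶜ : Set X) a₁) = univ :=
    hmin _ isClosed_closure isPreconnected_connectedComponentIn.closure hbmem
      ⟨a₁, subset_closure (mem_connectedComponentIn ha₁b), ha₁⟩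
  have hbcpre : IsPreconnected ({b}ᶜ : Set X) :=
    isPreconnected_connectedComponentIn.subset_closure (connectedComponentIn_subset _ _)
      (by rw [hE2univ]; exact subset_univ _)
  -- (iv) b ∈ closure S
  have hbS : b ∈ closure S := by
    by_contra hbS
    obtain ⟨x, hxAc, hxu, hxv⟩ := hAcpre (closure S)ᶜ ({b}ᶜ)
      isClosed_closure.isOpen_compl isClosed_singleton.isOpen_compl
      (by
        intro x hx
        by_cases hxb : x = b
        · exact Or.inl (hxb ▸ hbS)
        · exact Or.inr hxb)
      ⟨b, hbAc, hbS⟩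
      (by
        obtain ⟨s, hs⟩ := hSne
        exact ⟨s, hs.1, hs.2⟩)
    exact hxu (subset_closure ⟨hxAc, hxv⟩)
  -- (v) closure S meets A
  have hSA : (closure S ∩ A).Nonempty := by
    by_contra hcon
    rw [not_nonempty_iff_eq_empty] at hcon
    obtain ⟨x, hxbc, hxu, hxv⟩ := hbcpre (closure S)ᶜ (Aᶜ)
      isClosed_closure.isOpen_compl hA.isOpen_compl
      (by
        intro x hx
        by_cases hxA : x ∈ A
        · refine Or.inl (fun hxS => ?_)
          exact (eq_empty_iff_forall_notMem.mp hcon) x ⟨hxS, hxA⟩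
        · exact Or.inr hxA)
      ⟨a₁, ha₁b, fun h => (eq_empty_iff_forall_notMem.mp hcon) a₁ ⟨h, ha₁⟩⟩
      (by
        obtain ⟨s, hs⟩ := hSne
        exact ⟨s, hs.2, hs.1⟩)
    exact hxu (subset_closure ⟨hxv, hxbc⟩)
  -- (iii) main symmetric argument
  have main : ∀ U V : Set X, U ∪ V = S → closure U ∩ V = ∅ → U ∩ closure V = ∅ →
      V.Nonempty → (closure U ∩ A).Nonempty → False := by
    intro U V hUV sep1 sep2 hVne hUA
    have hUS : U ⊆ S := hUV ▸ subset_union_left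
    have hVS : V ⊆ S := hUV ▸ subset_union_right
    set W := U ∪ {b} with hWdef
    have hbW : b ∈ W := Or.inr rfl
    have hWAc : W ⊆ Aᶜ := union_subset (fun y hy => (hUS hy).1)
      (singleton_subset_iff.mpr hbAc)
    have hbnV : b ∉ V := fun h => (hVS h).2 rfl
    have hWpre : IsPreconnected W := by
      intro p q hp hq hcov hWp hWq
      by_contra h0
      rw [not_nonempty_iff_eq_empty] at h0
      have inner : ∀ p q : Set X, IsOpen p → IsOpen q → W ⊆ p ∪ q →
          (W ∩ q).Nonempty → W ∩ (p ∩ q) = ∅ → b ∈ p → False := by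
        clear hp hq hcov hWp hWq h0
        intro p q hp hq hcov hWq h0 hbp
        set P := W ∩ p with hPdef
        set Q := W ∩ q with hQdef
        have hbP : b ∈ P := ⟨hbW, hbp⟩
        have hQU : Q ⊆ U := by
          rintro y ⟨hyW, hyq⟩
          rcases hyW with h | h
          · exact h
          · exact absurd ⟨hbW, hbp, (mem_singleton_iff.mp h) ▸ hyq⟩
              (eq_empty_iff_forall_notMem.mp h0 b)
        have hpQ : p ∩ Q = ∅ := by
          rw [eq_empty_iff_forall_notMem]
          rintro z ⟨hz1, hz2⟩
          exact (eq_empty_iff_forall_notMem.mp h0) z ⟨hz2.1, hz1, hz2.2⟩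
        have hqP : q ∩ P = ∅ := by
          rw [eq_empty_iff_forall_notMem]
          rintro z ⟨hz1, hz2⟩
          exact (eq_empty_iff_forall_notMem.mp h0) z ⟨hz2.1, hz2.2, hz1⟩
        have hPQ : closure P ∩ Q = ∅ := by
          rw [eq_empty_iff_forall_notMem]
          rintro y ⟨hy1, hy2⟩
          obtain ⟨z, hz⟩ := mem_closure_iff.mp hy1 q hq hy2.2
          exact (eq_empty_iff_forall_notMem.mp hqP) z hz
        have hQP : closure Q ∩ P = ∅ := by
          rw [eq_empty_iff_forall_notMem]
          rintro y ⟨hy1, hy2⟩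
          obtain ⟨z, hz⟩ := mem_closure_iff.mp hy1 p hp hy2.2
          exact (eq_empty_iff_forall_notMem.mp hpQ) z hz
        obtain ⟨x, hxAc, hxQ, hxPV⟩ := (isPreconnected_closed_iff.mp hAcpre) (closure Q)
          (closure (P ∪ V)) isClosed_closure isClosed_closure
          (by
            intro x hx
            by_cases hxb : x = b
            · exact Or.inr (subset_closure (Or.inl (hxb ▸ hbP)))
            · have hxS : x ∈ S := ⟨hx, hxb⟩
              rw [← hUV] at hxS
              rcases hxS with h | h
              · rcases hcov (Or.inl h) with h' | h'
                · exact Or.inr (subset_closure (Or.inl ⟨Or.inl h, h'⟩))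
                · exact Or.inl (subset_closure ⟨Or.inl h, h'⟩)
              · exact Or.inr (subset_closure (Or.inr h)))
          (by
            obtain ⟨y, hy⟩ := hWq
            exact ⟨y, hWAc hy.1, subset_closure hy⟩)
          (by
            obtain ⟨y, hy⟩ := hVne
            exact ⟨y, (hVS hy).1, subset_closure (Or.inr hy)⟩)
        by_cases hxb : x = b
        · subst hxb
          obtain ⟨z, hz⟩ := mem_closure_iff.mp hxQ p hp hbp
          exact (eq_empty_iff_forall_notMem.mp hpQ) z hz
        · have hxS : x ∈ S := ⟨hxAc, hxb⟩
          rw [← hUV] at hxS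
          rcases hxS with hxU | hxV
          · rw [closure_union] at hxPV
            rcases hxPV with h | h
            · rcases hcov (Or.inl hxU) with h' | h'
              · exact (eq_empty_iff_forall_notMem.mp hQP) x ⟨hxQ, Or.inl hxU, h'⟩
              · exact (eq_empty_iff_forall_notMem.mp hPQ) x ⟨h, Or.inl hxU, h'⟩
            · exact (eq_empty_iff_forall_notMem.mp sep2) x ⟨hxU, h⟩
          · have : x ∈ closure U := closure_mono hQU hxQ
            exact (eq_empty_iff_forall_notMem.mp sep1) x ⟨this, hxV⟩
      rcases hcov hbW with hbp | hbq
      · exact inner p q hp hq hcov hWq h0 hbp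
      · exact inner q p hq hp (by rwa [union_comm]) hWp (by rwa [inter_comm q p]) hbq
    have hMuniv : closure W = univ :=
      hmin (closure W) isClosed_closure hWpre.closure (subset_closure hbW)
        (by
          obtain ⟨y, hy⟩ := hUA
          exact ⟨y, closure_mono subset_union_left hy.1, hy.2⟩)
    obtain ⟨y, hyV⟩ := hVne
    have hyW : y ∈ closure W := hMuniv ▸ mem_univ y
    rw [hWdef, closure_union, closure_singleton] at hyW
    rcases hyW with h | h
    · exact (eq_empty_iff_forall_notMem.mp sep1) y ⟨h, hyV⟩
    · exact hbnV ((mem_singleton_iff.mp h) ▸ hyV)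
  -- S is preconnected
  have hSpre : IsPreconnected S := by
    intro u v hu hv hcov h1 h2
    by_contra h0
    rw [not_nonempty_iff_eq_empty] at h0
    set U := S ∩ u with hUdef
    set V := S ∩ v with hVdef
    have hUV : U ∪ V = S := by
      rw [hUdef, hVdef, ← inter_union_distrib_left]
      exact inter_eq_left.mpr hcov
    have sep1 : closure U ∩ V = ∅ := by
      rw [eq_empty_iff_forall_notMem]
      rintro y ⟨hy1, hy2⟩
      obtain ⟨z, hzv, hzS, hzu⟩ := mem_closure_iff.mp hy1 v hv hy2.2
      exact (eq_empty_iff_forall_notMem.mp h0) z ⟨hzS, hzu, hzv⟩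
    have sep2 : U ∩ closure V = ∅ := by
      rw [eq_empty_iff_forall_notMem]
      rintro y ⟨hy1, hy2⟩
      obtain ⟨z, hzu, hzS, hzv⟩ := mem_closure_iff.mp hy2 u hu hy1.2
      exact (eq_empty_iff_forall_notMem.mp h0) z ⟨hzS, hzu, hzv⟩
    obtain ⟨a₂, ha₂S, ha₂A⟩ := hSA
    rw [← hUV, closure_union] at ha₂S
    rcases ha₂S with h | h
    · exact main U V hUV sep1 sep2 h2 ⟨a₂, h, ha₂A⟩
    · exact main V U (by rw [union_comm]; exact hUV)
        (by rw [eq_empty_iff_forall_notMem]; rintro y ⟨hy1, hy2⟩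
            exact (eq_empty_iff_forall_notMem.mp sep2) y ⟨hy2, hy1⟩)
        (by rw [eq_empty_iff_forall_notMem]; rintro y ⟨hy1, hy2⟩
            exact (eq_empty_iff_forall_notMem.mp sep1) y ⟨hy2, hy1⟩)
        h1 ⟨a₂, h, ha₂A⟩
  exact ⟨hSne, hSpre, hbS, hSA⟩

end Aux

/-- Global connection lemma: if Y is a locally compact metric space, Z ⊆ Y is
compact, and every compact subset of Y containing Z has nonempty boundary, then
Y \ Z contains a connected set whose closure meets Z and is not compact. -/
theorem stmt_6 {Y : Type*} [MetricSpace Y] [LocallyCompactSpace Y]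
    (Z : Set Y) (hZ : IsCompact Z)
    (hbd : ∀ K : Set Y, IsCompact K → Z ⊆ K → (frontier K).Nonempty) :
    ∃ Γ : Set Y, Γ ⊆ Zᶜ ∧ IsConnected Γ ∧
      (closure Γ ∩ Z).Nonempty ∧ ¬ IsCompact (closure Γ) := by
  classical
  let X := OnePoint Y
  let i : Y → X := ((↑) : Y → OnePoint Y)
  have hemb : Topology.IsOpenEmbedding i := OnePoint.isOpenEmbedding_coe
  let Z' : Set X := i '' Z
  have hZ'cpt : IsCompact Z' := hZ.image OnePoint.continuous_coe
  have hZ'cl : IsClosed Z' := hZ'cpt.isClosed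
  -- no clopen subset of X contains Z' and avoids ∞
  have sep : ∀ V : Set X, IsClopen V → Z' ⊆ V → (∞ : X) ∉ V → False := by
    intro V hV hZV hinf
    have hVr : V ⊆ range i := by
      intro x hx
      rcases OnePoint.ne_infty_iff_exists.mp (fun h => hinf (h ▸ hx)) with ⟨y, hy⟩
      exact ⟨y, hy⟩
    have hiK : i '' (i ⁻¹' V) = V := image_preimage_eq_of_subset hVr
    have hKcpt : IsCompact (i ⁻¹' V) :=
      (hemb.isEmbedding.isCompact_iff).mpr (by rw [hiK]; exact hV.1.isCompact)
    have hKclopen : IsClopen (i ⁻¹' V) := hV.preimage OnePoint.continuous_coe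
    obtain ⟨y, hy⟩ := hbd (i ⁻¹' V) hKcpt (fun z hz => hZV ⟨z, hz, rfl⟩)
    rw [hKclopen.frontier_eq] at hy
    exact hy
  -- the connected component of ∞ meets Z'
  have hcc : (connectedComponent (∞ : X) ∩ Z').Nonempty := by
    rcases eq_empty_or_nonempty (connectedComponent (∞ : X) ∩ Z') with h | h
    · exfalso
      obtain ⟨V, hV, hiV, hVZ⟩ := aux_clopen_sep (∞ : X) hZ'cl h
      refine sep Vᶜ hV.compl ?_ (fun h' => h' hiV)
      intro z hz hzV
      exact (eq_empty_iff_forall_notMem.mp hVZ) z ⟨hzV, hz⟩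
    · exact h
  -- Zorn: a minimal continuum containing ∞ and meeting Z'
  let 𝒮 : Set (Set X) := {K | IsCompact K ∧ IsPreconnected K ∧ (∞ : X) ∈ K ∧ (K ∩ Z').Nonempty}
  have hC₀ : connectedComponent (∞ : X) ∈ 𝒮 :=
    ⟨isClosed_connectedComponent.isCompact, isPreconnected_connectedComponent,
      mem_connectedComponent, hcc⟩
  have hchain : ∀ c ⊆ 𝒮, IsChain (· ⊆ ·) c → c.Nonempty →
      ∃ lb ∈ 𝒮, ∀ s ∈ c, lb ⊆ s := by
    intro c hc hchain hcne
    have : Nonempty c := hcne.to_subtype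
    refine ⟨⋂₀ c, ⟨?_, ?_, ?_, ?_⟩, fun s hs => sInter_subset_of_mem hs⟩
    · exact (isClosed_sInter (fun s hs => (hc hs).1.isClosed)).isCompact
    · exact aux_inter_chain hchain hcne (fun s hs => (hc hs).1.isClosed)
        (fun s hs => (hc hs).2.1)
    · exact mem_sInter.mpr (fun s hs => (hc hs).2.2.1)
    · obtain ⟨y, hy⟩ := IsCompact.nonempty_iInter_of_directed_nonempty_isCompact_isClosed
        (fun s : c => s.1 ∩ Z')
        (by
          rintro ⟨s, hs⟩ ⟨t, ht⟩
          rcases hchain.total hs ht with h | h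
          · exact ⟨⟨s, hs⟩, inter_subset_inter_left _ (le_refl s),
              inter_subset_inter_left _ h⟩
          · exact ⟨⟨t, ht⟩, inter_subset_inter_left _ h,
              inter_subset_inter_left _ (le_refl t)⟩)
        (fun s => (hc s.2).2.2.2)
        (fun s => ((hc s.2).1.isClosed.inter hZ'cl).isCompact)
        (fun s => (hc s.2).1.isClosed.inter hZ'cl)
      simp only [mem_iInter, mem_inter_iff] at hy
      exact ⟨y, mem_sInter.mpr (fun s hs => (hy ⟨s, hs⟩).1),
        (hy ⟨hcne.some, hcne.some_mem⟩).2⟩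
  obtain ⟨K, -, hKmin⟩ := zorn_superset_nonempty 𝒮 hchain _ hC₀
  obtain ⟨hKcpt, hKpre, hKinf, hKZ⟩ := hKmin.1
  have hKeq : ∀ E ∈ 𝒮, E ⊆ K → E = K := fun E hE hEK => hEK.antisymm (hKmin.2 hE hEK)
  haveI : CompactSpace K := isCompact_iff_compactSpace.mp hKcpt
  haveI : ConnectedSpace K := Subtype.connectedSpace ⟨⟨∞, hKinf⟩, hKpre⟩
  let A : Set K := Subtype.val ⁻¹' Z'
  have hAcl : IsClosed A := hZ'cl.preimage continuous_subtype_val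
  have hAne : A.Nonempty := by
    obtain ⟨y, hyK, hyZ⟩ := hKZ
    exact ⟨⟨y, hyK⟩, hyZ⟩
  let bK : K := ⟨∞, hKinf⟩
  have hbA : bK ∉ A := fun h => OnePoint.infty_notMem_image_coe h
  have hminK : ∀ E : Set K, IsClosed E → IsPreconnected E → bK ∈ E →
      (E ∩ A).Nonempty → E = univ := by
    intro E hEcl hEpre hbE hEA
    have himg : Subtype.val '' E ∈ 𝒮 := by
      refine ⟨(hEcl.isCompact).image continuous_subtype_val,
        hEpre.image _ continuous_subtype_val.continuousOn, ⟨bK, hbE, rfl⟩, ?_⟩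
      obtain ⟨x, hx⟩ := hEA
      exact ⟨x.1, ⟨x, hx.1, rfl⟩, hx.2⟩
    have hEK : Subtype.val '' E = K := hKeq _ himg (by rintro _ ⟨x, -, rfl⟩; exact x.2)
    apply eq_univ_of_forall
    intro x
    have hx : (x : X) ∈ Subtype.val '' E := by rw [hEK]; exact x.2
    obtain ⟨e, he, hex⟩ := hx
    exact (Subtype.val_injective hex) ▸ he
  obtain ⟨hSne, hSpre, hbScl, hSAcl⟩ := aux_min hAcl hAne hbA hminK
  let SK : Set K := Aᶜ \ {bK}
  let S : Set X := Subtype.val '' SK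
  have hSr : S ⊆ range i := by
    rintro _ ⟨x, hx, rfl⟩
    rcases OnePoint.ne_infty_iff_exists.mp
      (fun h => hx.2 (Subtype.ext h : x = bK)) with ⟨y, hy⟩
    exact ⟨y, hy⟩
  let Γ : Set Y := i ⁻¹' S
  have hiΓ : i '' Γ = S := image_preimage_eq_of_subset hSr
  have hScl : ∀ x : K, x ∈ closure SK → (x : X) ∈ closure S := by
    intro x hx
    exact (image_closure_subset_closure_image continuous_subtype_val) ⟨x, hx, rfl⟩
  refine ⟨Γ, ?_, ⟨?_, ?_⟩, ?_, ?_⟩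
  · -- Γ ⊆ Zᶜ
    intro y hy hyZ
    obtain ⟨x, hx, hxy⟩ := hy
    exact hx.1 (show (x : X) ∈ Z' by rw [hxy]; exact ⟨y, hyZ, rfl⟩)
  · -- nonempty
    obtain ⟨x, hx⟩ := hSne
    obtain ⟨y, hy⟩ := hSr ⟨x, hx, rfl⟩
    exact ⟨y, show i y ∈ S by rw [hy]; exact ⟨x, hx, rfl⟩⟩
  · -- preconnected
    have hSp : IsPreconnected S := hSpre.image _ continuous_subtype_val.continuousOn
    exact (hemb.isEmbedding.toIsInducing.isPreconnected_image).mp (by rwa [hiΓ])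
  · -- closure meets Z
    obtain ⟨a, haScl, haA⟩ := hSAcl
    obtain ⟨z, hz, hza⟩ := haA
    refine ⟨z, ?_, hz⟩
    rw [hemb.isEmbedding.closure_eq_preimage_closure_image Γ]
    show i z ∈ closure (i '' Γ)
    rw [hiΓ]
    exact hza ▸ hScl a haScl
  · -- closure not compact
    intro hcpt
    have hD : IsClosed (i '' closure Γ) := (hcpt.image OnePoint.continuous_coe).isClosed
    have hsub : closure S ⊆ i '' closure Γ :=
      closure_minimal (by rw [← hiΓ]; exact image_mono subset_closure) hD
    exact OnePoint.infty_notMem_image_coe (hsub (hScl bK hbScl))
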